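/- arXiv:2508.16902 — 2 statements merged into one kernel-verified Lean document; each statement's English description precedes it below -/
import Mathlib

section
/- Let (Ω,𝔉,P) be a probability space, 𝔊₁,…,𝔊_J sub-σ-algebras of 𝔉, φ a square-integrable real random variable, and π₀, π₁,…,π_J > 0. For tuples f = (f₁,…,f_J) with each f_k square-integrable, 𝔊_k-measurable, and E[f_k] = 0, define Q(f) = π₀^{-1} E[(φ − Σ_{j=1}^J f_j)²] + Σ_{k=1}^J π_k^{-1} E[f_k²]. Then f* = (f₁*,…,f_J*) minimizes Q over all such tuples if and only if for every k = 1,…,J, E[ φ − Σ_{j=1}^J γ_{j,k} f_j* | 𝔊_k ] = E[φ] almost surely, where γ_{j,k} = 1 + 1{j=k} (π₀/π_k). -/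
open MeasureTheory

namespace OptTransferAux

variable {Ω : Type*} [m0 : MeasurableSpace Ω] {μ : Measure Ω}

lemma int_mul {f g : Ω → ℝ} (hf : MemLp f 2 μ) (hg : MemLp g 2 μ) :
    Integrable (fun ω => f ω * g ω) μ := by
  have h : MemLp (f • g) 1 μ := MemLp.smul (hpqr := ⟨by simp [ENNReal.inv_two_add_inv_two]⟩) hg hf
  simpa [Pi.smul_apply, smul_eq_mul, Pi.mul_def] using memLp_one_iff_integrable.mp h

lemma quad_zero {L C : ℝ} (hC : 0 ≤ C) (h : ∀ t : ℝ, 0 ≤ 2 * t * L + t ^ 2 * C) : L = 0 := by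
  by_contra hL
  have h1 := h (-L / (C + 1))
  have hC1 : (0:ℝ) < C + 1 := by linarith
  have key : 2 * (-L / (C + 1)) * L + (-L / (C + 1)) ^ 2 * C
      = -(L ^ 2) * (C + 2) / (C + 1) ^ 2 := by
    field_simp
    ring
  rw [key] at h1
  have hL2 : 0 < L ^ 2 := by positivity
  have : -(L ^ 2) * (C + 2) / (C + 1) ^ 2 < 0 := by
    apply div_neg_of_neg_of_pos
    · nlinarith
    · positivity
  linarith

lemma scalar_id {J : ℕ} (π₀ : ℝ) (π : Fin J → ℝ) (hπ₀ : π₀ ≠ 0)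
    (B SS : ℝ) (F H BH FH : Fin J → ℝ) :
    π₀⁻¹ * (B - 2 * (∑ k, BH k) + SS) + ∑ k, (π k)⁻¹ * (F k + 2 * FH k + H k)
      = (π₀⁻¹ * B + ∑ k, (π k)⁻¹ * F k)
        + (-2 * π₀⁻¹) * (∑ k, (BH k - (π₀ / π k) * FH k))
        + (π₀⁻¹ * SS + ∑ k, (π k)⁻¹ * H k) := by
  have hterm : ∀ k, (π k)⁻¹ * (F k + 2 * FH k + H k)
      = (π k)⁻¹ * F k + (-2 * π₀⁻¹) * (BH k - (π₀ / π k) * FH k)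
        + (π k)⁻¹ * H k + (2 * π₀⁻¹) * BH k := by
    intro k
    by_cases hk : π k = 0
    · simp only [hk, inv_zero, zero_mul, div_zero, mul_zero, sub_zero]
      ring
    · field_simp
      ring
  calc π₀⁻¹ * (B - 2 * (∑ k, BH k) + SS) + ∑ k, (π k)⁻¹ * (F k + 2 * FH k + H k)
      = π₀⁻¹ * (B - 2 * (∑ k, BH k) + SS)
        + ∑ k, ((π k)⁻¹ * F k + (-2 * π₀⁻¹) * (BH k - (π₀ / π k) * FH k)
          + (π k)⁻¹ * H k + (2 * π₀⁻¹) * BH k) := by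
        rw [Finset.sum_congr rfl fun k _ => hterm k]
    _ = _ := by
        simp only [Finset.sum_add_distrib, ← Finset.mul_sum]
        ring

lemma Qdiff [IsProbabilityMeasure μ] {J : ℕ} (π₀ : ℝ) (π : Fin J → ℝ) (hπ₀ : π₀ ≠ 0)
    (φ : Ω → ℝ) (hφ : MemLp φ 2 μ)
    (f h : Fin J → Ω → ℝ) (hf : ∀ j, MemLp (f j) 2 μ) (hh : ∀ j, MemLp (h j) 2 μ) :
    π₀⁻¹ * ∫ ω, (φ ω - ∑ j, (f j ω + h j ω)) ^ 2 ∂μ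
        + ∑ k, (π k)⁻¹ * ∫ ω, (f k ω + h k ω) ^ 2 ∂μ
      = (π₀⁻¹ * ∫ ω, (φ ω - ∑ j, f j ω) ^ 2 ∂μ + ∑ k, (π k)⁻¹ * ∫ ω, (f k ω) ^ 2 ∂μ)
        + (-2 * π₀⁻¹) * ∑ k, ∫ ω,
            (φ ω - ∑ j, (1 + if j = k then π₀ / π k else 0) * f j ω) * h k ω ∂μ
        + (π₀⁻¹ * ∫ ω, (∑ j, h j ω) ^ 2 ∂μ + ∑ k, (π k)⁻¹ * ∫ ω, (h k ω) ^ 2 ∂μ) := by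
  set b : Ω → ℝ := fun ω => φ ω - ∑ j, f j ω with hbdef
  set S : Ω → ℝ := fun ω => ∑ j, h j ω with hSdef
  have hb : MemLp b 2 μ := hφ.sub (memLp_finset_sum Finset.univ fun j _ => hf j)
  have hS : MemLp S 2 μ := memLp_finset_sum Finset.univ fun j _ => hh j
  have hbb : Integrable (fun ω => b ω ^ 2) μ := hb.integrable_sq
  have hSS : Integrable (fun ω => S ω ^ 2) μ := hS.integrable_sq
  have hbh : ∀ j, Integrable (fun ω => b ω * h j ω) μ := fun j => int_mul hb (hh j)
  have hfh : ∀ j, Integrable (fun ω => f j ω * h j ω) μ := fun j => int_mul (hf j) (hh j)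
  have hbS : Integrable (fun ω => b ω * S ω) μ := int_mul hb hS
  have hbSsum : ∫ ω, b ω * S ω ∂μ = ∑ k, ∫ ω, b ω * h k ω ∂μ := by
    rw [← integral_finset_sum Finset.univ fun k _ => hbh k]
    refine integral_congr_ae (Filter.Eventually.of_forall fun ω => ?_)
    simp [hSdef, Finset.mul_sum]
  have I1 : ∫ ω, (φ ω - ∑ j, (f j ω + h j ω)) ^ 2 ∂μ
      = (∫ ω, b ω ^ 2 ∂μ) - 2 * (∑ k, ∫ ω, b ω * h k ω ∂μ) + ∫ ω, S ω ^ 2 ∂μ := by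
    have e1 : ∫ ω, (φ ω - ∑ j, (f j ω + h j ω)) ^ 2 ∂μ
        = ∫ ω, (b ω ^ 2 - 2 * (b ω * S ω) + S ω ^ 2) ∂μ := by
      refine integral_congr_ae (Filter.Eventually.of_forall fun ω => ?_)
      simp only [hbdef, hSdef, Finset.sum_add_distrib]
      ring
    have hsub : Integrable (fun ω => b ω ^ 2 - 2 * (b ω * S ω)) μ := by
      exact hbb.sub (hbS.const_mul 2)
    have h2bS : Integrable (fun ω => 2 * (b ω * S ω)) μ := hbS.const_mul 2
    rw [e1, integral_add hsub hSS, integral_sub hbb h2bS, integral_const_mul, hbSsum]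
  have I2 : ∀ k, ∫ ω, (f k ω + h k ω) ^ 2 ∂μ
      = (∫ ω, f k ω ^ 2 ∂μ) + 2 * (∫ ω, f k ω * h k ω ∂μ) + ∫ ω, h k ω ^ 2 ∂μ := by
    intro k
    have e2 : ∫ ω, (f k ω + h k ω) ^ 2 ∂μ
        = ∫ ω, (f k ω ^ 2 + 2 * (f k ω * h k ω) + h k ω ^ 2) ∂μ := by
      refine integral_congr_ae (Filter.Eventually.of_forall fun ω => ?_)
      ring
    have h2fh : Integrable (fun ω => 2 * (f k ω * h k ω)) μ := (hfh k).const_mul 2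
    have hadd : Integrable (fun ω => f k ω ^ 2 + 2 * (f k ω * h k ω)) μ := by
      exact (hf k).integrable_sq.add h2fh
    rw [e2, integral_add hadd (hh k).integrable_sq,
      integral_add (hf k).integrable_sq h2fh, integral_const_mul]
  have I3 : ∀ k, ∫ ω, (φ ω - ∑ j, (1 + if j = k then π₀ / π k else 0) * f j ω) * h k ω ∂μ
      = (∫ ω, b ω * h k ω ∂μ) - (π₀ / π k) * ∫ ω, f k ω * h k ω ∂μ := by
    intro k
    have e3 : ∫ ω, (φ ω - ∑ j, (1 + if j = k then π₀ / π k else 0) * f j ω) * h k ω ∂μ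
        = ∫ ω, (b ω * h k ω - (π₀ / π k) * (f k ω * h k ω)) ∂μ := by
      refine integral_congr_ae (Filter.Eventually.of_forall fun ω => ?_)
      dsimp only
      have : ∑ j, (1 + if j = k then π₀ / π k else 0) * f j ω
          = (∑ j, f j ω) + (π₀ / π k) * f k ω := by
        simp only [add_mul, one_mul, Finset.sum_add_distrib, ite_mul, zero_mul]
        rw [Finset.sum_ite_eq' Finset.univ k (fun j => (π₀ / π k) * f j ω)]
        simp
      rw [this]
      simp only [hbdef]
      ring
    have hc : Integrable (fun ω => (π₀ / π k) * (f k ω * h k ω)) μ := (hfh k).const_mul _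
    rw [e3, integral_sub (hbh k) hc, integral_const_mul]
  have S2 : ∑ k, (π k)⁻¹ * ∫ ω, (f k ω + h k ω) ^ 2 ∂μ
      = ∑ k, (π k)⁻¹ * ((∫ ω, f k ω ^ 2 ∂μ) + 2 * (∫ ω, f k ω * h k ω ∂μ)
          + ∫ ω, h k ω ^ 2 ∂μ) :=
    Finset.sum_congr rfl fun k _ => by rw [I2 k]
  have S3 : ∑ k, ∫ ω, (φ ω - ∑ j, (1 + if j = k then π₀ / π k else 0) * f j ω) * h k ω ∂μ
      = ∑ k, ((∫ ω, b ω * h k ω ∂μ) - (π₀ / π k) * ∫ ω, f k ω * h k ω ∂μ) :=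
    Finset.sum_congr rfl fun k _ => I3 k
  rw [I1, S2, S3]
  exact scalar_id π₀ π hπ₀ _ _ _ _ _ _

lemma int_mul_eq_zero_of_condexp_const [IsProbabilityMeasure μ]
    {m : MeasurableSpace Ω} (hm : m ≤ m0)
    {ψ h : Ω → ℝ} {c : ℝ} (hψ : MemLp ψ 2 μ) (hh : MemLp h 2 μ)
    (hhm : StronglyMeasurable[m] h) (hh0 : ∫ ω, h ω ∂μ = 0)
    (hce : μ[ψ|m] =ᵐ[μ] fun _ => c) :
    ∫ ω, ψ ω * h ω ∂μ = 0 := by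
  have hmul : Integrable (h * ψ) μ := int_mul (m0 := m0) hh hψ
  have hpull := condExp_mul_of_stronglyMeasurable_left hhm hmul (hψ.integrable one_le_two)
  have h1 : ∫ ω, ψ ω * h ω ∂μ = ∫ ω, (h * ψ) ω ∂μ :=
    integral_congr_ae (Filter.Eventually.of_forall fun ω => mul_comm _ _)
  have h2 : ∫ ω, (h * ψ) ω ∂μ = ∫ ω, (μ[h * ψ|m]) ω ∂μ := (integral_condExp (μ := μ) (f := h * ψ) hm).symm
  have h3 : ∫ ω, (μ[h * ψ|m]) ω ∂μ = ∫ ω, h ω * c ∂μ := by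
    refine integral_congr_ae ?_
    filter_upwards [hpull, hce] with ω hp hc
    rw [hp, Pi.mul_apply, hc]
  rw [h1, h2, h3, integral_mul_const, hh0, zero_mul]

end OptTransferAux

open OptTransferAux in
/-- On a probability space with sub-σ-algebras `𝔊₁,…,𝔊_J`, for
square-integrable `φ` and weights `π₀, π₁,…,π_J > 0`, a tuple `f* = (f₁*,…,f_J*)` of
square-integrable, `𝔊_k`-measurable, mean-zero variables minimizes
`Q(f) = π₀⁻¹E[(φ - Σⱼ fⱼ)²] + Σₖ πₖ⁻¹E[fₖ²]` over all such tuples if and only if for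
every `k`, `E[φ - Σⱼ γ_{j,k} fⱼ* | 𝔊_k] = E[φ]` a.s., where `γ_{j,k} = 1 + 1{j=k}(π₀/πₖ)`. -/
theorem optimal_transfer_function_first_order_conditions
    {Ω : Type*} [m0 : MeasurableSpace Ω] (μ : Measure Ω) [IsProbabilityMeasure μ]
    {J : ℕ} (G : Fin J → MeasurableSpace Ω) (hG : ∀ k, G k ≤ m0)
    (φ : Ω → ℝ) (hφ : MemLp φ 2 μ)
    (π₀ : ℝ) (π : Fin J → ℝ) (hπ₀ : 0 < π₀) (hπ : ∀ k, 0 < π k)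
    (fstar : Fin J → Ω → ℝ)
    (hstar : ∀ k, MemLp (fstar k) 2 μ ∧ StronglyMeasurable[G k] (fstar k) ∧
      ∫ ω, fstar k ω ∂μ = 0) :
    ((∀ g : Fin J → Ω → ℝ,
        (∀ k, MemLp (g k) 2 μ ∧ StronglyMeasurable[G k] (g k) ∧ ∫ ω, g k ω ∂μ = 0) →
        π₀⁻¹ * ∫ ω, (φ ω - ∑ j, fstar j ω) ^ 2 ∂μ +
            ∑ k, (π k)⁻¹ * ∫ ω, (fstar k ω) ^ 2 ∂μ ≤
          π₀⁻¹ * ∫ ω, (φ ω - ∑ j, g j ω) ^ 2 ∂μ +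
            ∑ k, (π k)⁻¹ * ∫ ω, (g k ω) ^ 2 ∂μ) ↔
      (∀ k, μ[fun ω => φ ω - ∑ j, (1 + if j = k then π₀ / π k else 0) * fstar j ω | G k]
          =ᵐ[μ] fun _ => ∫ ω, φ ω ∂μ)) := by
  classical
  have h12 : (1 : ENNReal) ≤ 2 := one_le_two
  have hfL2 : ∀ j, MemLp (fstar j) 2 μ := fun j => (hstar j).1
  have hfint : ∀ j, Integrable (fstar j) μ := fun j => (hfL2 j).integrable h12
  have hφint : Integrable φ μ := hφ.integrable h12
  have hψL2 : ∀ k, MemLp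
      (fun ω => φ ω - ∑ j, (1 + if j = k then π₀ / π k else 0) * fstar j ω) 2 μ :=
    fun k => hφ.sub (memLp_finset_sum Finset.univ fun j _ => ((hfL2 j).const_mul _))
  have hψint : ∀ k, Integrable
      (fun ω => φ ω - ∑ j, (1 + if j = k then π₀ / π k else 0) * fstar j ω) μ :=
    fun k => (hψL2 k).integrable h12
  have hψmean : ∀ k, ∫ ω, (φ ω - ∑ j, (1 + if j = k then π₀ / π k else 0) * fstar j ω) ∂μ
      = ∫ ω, φ ω ∂μ := by
    intro k
    rw [integral_sub hφint (integrable_finset_sum _ fun j _ => (hfint j).const_mul _),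
      integral_finset_sum _ fun j _ => (hfint j).const_mul _]
    have hz : ∀ j, ∫ ω, (1 + if j = k then π₀ / π k else 0) * fstar j ω ∂μ = 0 := fun j => by
      rw [integral_const_mul, (hstar j).2.2, mul_zero]
    rw [Finset.sum_congr rfl fun j _ => hz j]
    simp
  constructor
  · intro hmin k
    -- Step A: the first-order condition in weak form
    have key : ∀ h : Ω → ℝ, MemLp h 2 μ → StronglyMeasurable[G k] h → ∫ ω, h ω ∂μ = 0 →
        ∫ ω, (φ ω - ∑ j, (1 + if j = k then π₀ / π k else 0) * fstar j ω) * h ω ∂μ = 0 := by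
      intro h hh2 hhm hh0
      set X := ∫ ω, (φ ω - ∑ j, (1 + if j = k then π₀ / π k else 0) * fstar j ω) * h ω ∂μ
        with hX
      set C2 := ∫ ω, h ω ^ 2 ∂μ with hC2
      have hC2nn : 0 ≤ C2 := integral_nonneg fun ω => sq_nonneg _
      have hCnn : 0 ≤ (π₀⁻¹ + (π k)⁻¹) * C2 := by
        have : 0 ≤ π₀⁻¹ + (π k)⁻¹ := by
          have := hπ k
          positivity
        exact mul_nonneg this hC2nn
      have hquad : ∀ t : ℝ, 0 ≤ 2 * t * (-(π₀⁻¹) * X) + t ^ 2 * ((π₀⁻¹ + (π k)⁻¹) * C2) := by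
        intro t
        have hHt : ∀ j, MemLp (fun ω => if j = k then t * h ω else 0) 2 μ := by
          intro j
          by_cases hj : j = k
          · simpa [hj] using hh2.const_mul t
          · simp only [if_neg hj]
            exact memLp_const 0
        have hadm : ∀ j, MemLp (fun ω => fstar j ω + if j = k then t * h ω else 0) 2 μ ∧
            StronglyMeasurable[G j] (fun ω => fstar j ω + if j = k then t * h ω else 0) ∧
            ∫ ω, (fstar j ω + if j = k then t * h ω else 0) ∂μ = 0 := by
          intro j
          by_cases hj : j = k
          · subst hj
            refine ⟨?_, ?_, ?_⟩
            · simpa [Pi.add_def] using (hfL2 j).add (hh2.const_mul t)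
            · simpa [Pi.add_def] using (hstar j).2.1.add (hhm.const_mul t)
            · simp only [eq_self_iff_true, if_true]
              rw [integral_add (hfint j) ((hh2.integrable h12).const_mul t), (hstar j).2.2,
                integral_const_mul, hh0, mul_zero, add_zero]
          · refine ⟨?_, ?_, ?_⟩
            · simpa [hj] using hfL2 j
            · simpa [hj] using (hstar j).2.1
            · simpa [hj] using (hstar j).2.2
        have hg := hmin (fun j ω => fstar j ω + if j = k then t * h ω else 0) hadm
        rw [Qdiff (m0 := m0) π₀ π (ne_of_gt hπ₀) φ hφ fstar
          (fun j ω => if j = k then t * h ω else 0) hfL2 hHt] at hg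
        have cross : ∑ k', ∫ ω,
            (φ ω - ∑ j, (1 + if j = k' then π₀ / π k' else 0) * fstar j ω)
              * (if k' = k then t * h ω else 0) ∂μ = t * X := by
          rw [Finset.sum_eq_single_of_mem k (Finset.mem_univ k)]
          · simp only [if_pos rfl]
            calc ∫ ω, (φ ω - ∑ j, (1 + if j = k then π₀ / π k else 0) * fstar j ω)
                  * (t * h ω) ∂μ
                = ∫ ω, t * ((φ ω - ∑ j, (1 + if j = k then π₀ / π k else 0) * fstar j ω)
                  * h ω) ∂μ :=
                  integral_congr_ae (Filter.Eventually.of_forall fun ω => by ring)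
              _ = t * X := by rw [integral_const_mul, hX]
          · intro k' _ hk'
            simp [if_neg hk']
        have hSq : ∫ ω, (∑ j, if j = k then t * h ω else 0) ^ 2 ∂μ = t ^ 2 * C2 := by
          calc ∫ ω, (∑ j, if j = k then t * h ω else 0) ^ 2 ∂μ
              = ∫ ω, t ^ 2 * h ω ^ 2 ∂μ := by
                refine integral_congr_ae (Filter.Eventually.of_forall fun ω => ?_)
                dsimp only
                rw [Finset.sum_ite_eq' Finset.univ k (fun _ => t * h ω)]
                simp [mul_pow]
            _ = t ^ 2 * C2 := by rw [integral_const_mul, hC2]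
        have hquadsum : ∑ k', (π k')⁻¹ * ∫ ω, (if k' = k then t * h ω else 0) ^ 2 ∂μ
            = (π k)⁻¹ * (t ^ 2 * C2) := by
          rw [Finset.sum_eq_single_of_mem k (Finset.mem_univ k)]
          · simp only [if_pos rfl]
            congr 1
            calc ∫ ω, (t * h ω) ^ 2 ∂μ = ∫ ω, t ^ 2 * h ω ^ 2 ∂μ := by
                  refine integral_congr_ae (Filter.Eventually.of_forall fun ω => ?_)
                  ring
              _ = t ^ 2 * C2 := by rw [integral_const_mul, hC2]
          · intro k' _ hk'
            simp [if_neg hk']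
        rw [cross, hSq, hquadsum] at hg
        nlinarith [hg]
      have hL := quad_zero hCnn hquad
      have hπ₀inv : π₀⁻¹ ≠ 0 := inv_ne_zero (ne_of_gt hπ₀)
      have : π₀⁻¹ * X = 0 := by
        have := neg_eq_zero.mp (by linarith [hL] : -(π₀⁻¹ * X) = 0)
        exact this
      rcases mul_eq_zero.mp this with h' | h'
      · exact absurd h' hπ₀inv
      · exact h'
    -- Step B: conclude the conditional expectation identity
    refine (ae_eq_condExp_of_forall_setIntegral_eq (hG k) (hψint k)
      (fun s _ _ => (integrable_const _).integrableOn) ?_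
      stronglyMeasurable_const.aestronglyMeasurable).symm
    intro s hs hμs
    have hsm0 : MeasurableSet s := hG k s hs
    have hindL2 : MemLp (fun ω => Set.indicator s (fun _ => (1 : ℝ)) ω - (μ s).toReal) 2 μ :=
      (memLp_indicator_const 2 hsm0 1 (Or.inr (measure_ne_top μ s))).sub (memLp_const _)
    have hindm : StronglyMeasurable[G k]
        (fun ω => Set.indicator s (fun _ => (1 : ℝ)) ω - (μ s).toReal) :=
      (stronglyMeasurable_const.indicator hs).sub stronglyMeasurable_const
    have hindint : Integrable (fun ω => Set.indicator s (fun _ => (1 : ℝ)) ω) μ :=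
      (integrable_const 1).indicator hsm0
    have hind0 : ∫ ω, (Set.indicator s (fun _ => (1 : ℝ)) ω - (μ s).toReal) ∂μ = 0 := by
      rw [integral_sub hindint (integrable_const _), integral_indicator_const (1 : ℝ) hsm0,
        integral_const]
      simp [measureReal_def]
    have h0 := key _ hindL2 hindm hind0
    have e : ∫ ω, (φ ω - ∑ j, (1 + if j = k then π₀ / π k else 0) * fstar j ω)
        * (Set.indicator s (fun _ => (1 : ℝ)) ω - (μ s).toReal) ∂μ
        = (∫ ω in s, (φ ω - ∑ j, (1 + if j = k then π₀ / π k else 0) * fstar j ω) ∂μ)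
          - (μ s).toReal * ∫ ω, (φ ω - ∑ j, (1 + if j = k then π₀ / π k else 0)
              * fstar j ω) ∂μ := by
      have e1 : ∫ ω, (φ ω - ∑ j, (1 + if j = k then π₀ / π k else 0) * fstar j ω)
          * (Set.indicator s (fun _ => (1 : ℝ)) ω - (μ s).toReal) ∂μ
          = ∫ ω, (Set.indicator s
              (fun ω => φ ω - ∑ j, (1 + if j = k then π₀ / π k else 0) * fstar j ω) ω
            - (μ s).toReal * (φ ω - ∑ j, (1 + if j = k then π₀ / π k else 0) * fstar j ω)) ∂μ := by
        refine integral_congr_ae (Filter.Eventually.of_forall fun ω => ?_)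
        by_cases hω : ω ∈ s
        · simp only [Set.indicator_of_mem hω]
          ring
        · simp only [Set.indicator_of_notMem hω]
          ring
      rw [e1, integral_sub ((hψint k).indicator hsm0) ((hψint k).const_mul _),
        integral_indicator hsm0, integral_const_mul]
    rw [e, hψmean k] at h0
    rw [setIntegral_const]
    have : ∫ ω in s, (φ ω - ∑ j, (1 + if j = k then π₀ / π k else 0) * fstar j ω) ∂μ
        = (μ s).toReal * ∫ ω, φ ω ∂μ := by linarith
    rw [this]
    simp [smul_eq_mul, measureReal_def]
  · intro hfoc g hg
    have hgL2 : ∀ j, MemLp (g j) 2 μ := fun j => (hg j).1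
    have hh : ∀ j, MemLp (fun ω => g j ω - fstar j ω) 2 μ := fun j => (hgL2 j).sub (hfL2 j)
    have E := Qdiff (m0 := m0) π₀ π (ne_of_gt hπ₀) φ hφ fstar
      (fun j ω => g j ω - fstar j ω) hfL2 hh
    have esum : ∀ ω, ∑ j, (fstar j ω + (g j ω - fstar j ω)) = ∑ j, g j ω := fun ω =>
      Finset.sum_congr rfl fun j _ => by ring
    have eg1 : ∫ ω, (φ ω - ∑ j, g j ω) ^ 2 ∂μ
        = ∫ ω, (φ ω - ∑ j, (fstar j ω + (g j ω - fstar j ω))) ^ 2 ∂μ :=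
      integral_congr_ae (Filter.Eventually.of_forall fun ω => by dsimp only; rw [esum ω])
    have eg2 : ∀ k, ∫ ω, (g k ω) ^ 2 ∂μ
        = ∫ ω, (fstar k ω + (g k ω - fstar k ω)) ^ 2 ∂μ := fun k =>
      integral_congr_ae (Filter.Eventually.of_forall fun ω => by dsimp only; ring_nf)
    have S2 : ∑ k, (π k)⁻¹ * ∫ ω, (g k ω) ^ 2 ∂μ
        = ∑ k, (π k)⁻¹ * ∫ ω, (fstar k ω + (g k ω - fstar k ω)) ^ 2 ∂μ :=
      Finset.sum_congr rfl fun k _ => by rw [eg2 k]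
    rw [eg1, S2, E]
    have hcross : ∀ k, ∫ ω, (φ ω - ∑ j, (1 + if j = k then π₀ / π k else 0) * fstar j ω)
        * (g k ω - fstar k ω) ∂μ = 0 := by
      intro k
      refine int_mul_eq_zero_of_condexp_const (m0 := m0) (hG k) (hψL2 k)
        ((hgL2 k).sub (hfL2 k)) ((hg k).2.1.sub (hstar k).2.1) ?_ (hfoc k)
      rw [integral_sub ((hgL2 k).integrable h12) (hfint k), (hg k).2.2, (hstar k).2.2, sub_zero]
    have S4 : ∑ k, ∫ ω, (φ ω - ∑ j, (1 + if j = k then π₀ / π k else 0) * fstar j ω)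
        * (g k ω - fstar k ω) ∂μ = 0 := Finset.sum_eq_zero fun k _ => hcross k
    rw [S4]
    simp only [mul_zero, add_zero]
    have h1 : 0 ≤ π₀⁻¹ * ∫ ω, (∑ j, (g j ω - fstar j ω)) ^ 2 ∂μ :=
      mul_nonneg (by positivity) (integral_nonneg fun ω => sq_nonneg _)
    have h2 : 0 ≤ ∑ k, (π k)⁻¹ * ∫ ω, (g k ω - fstar k ω) ^ 2 ∂μ :=
      Finset.sum_nonneg fun k _ => mul_nonneg
        (inv_nonneg.mpr (le_of_lt (hπ k))) (integral_nonneg fun ω => sq_nonneg _)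
    linarith
end

section
/- Let (Ω,𝔉,P) be a probability space carrying a square-integrable real random variable φ and random elements X₁,…,X_J with values in measurable spaces S₁,…,S_J that are pairwise independent, together with an independent copy (φ', X₁',…,X_J') of the tuple (φ, X₁,…,X_J) (same joint distribution, independent of it). For k = 1,…,J let H_k: S_k × S_k → ℝ be bounded measurable, let f_k: S_k → ℝ be bounded measurable with E[f_k(X_k)] = 0, and let γ_{j,k} be reals with γ_{j,k} = 1 whenever j ≠ k. Then for every k, E[(φ − Σ_{j=1}^J γ_{j,k} f_j(X_j)) H_k(X_k, X_k') (φ' − Σ_{j=1}^J γ_{j,k} f_j(X_j'))] = E[(φ − γ_{k,k} f_k(X_k)) H_k(X_k, X_k') (φ' − γ_{k,k} f_k(X_k'))]. Consequently the risk R(f₁,…,f_J) = Σ_k of the left-hand terms decomposes as a sum of terms each depending only on the single function f_k. -/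
open MeasureTheory ProbabilityTheory

/-- A measurable function bounded in absolute value is integrable on a finite measure space. -/
lemma integrable_of_abs_le' {α : Type*} [MeasurableSpace α] {μ : Measure α} [IsFiniteMeasure μ]
    {g : α → ℝ} (hm : AEStronglyMeasurable g μ) {C : ℝ} (h : ∀ x, |g x| ≤ C) :
    Integrable g μ :=
  (integrable_const C).mono' hm (Filter.Eventually.of_forall fun x => by
    simpa [Real.norm_eq_abs] using h x)

/-- **separability of the kernel risk for pairwise independent blocks.**
With pairwise independent blocks `X₁,…,X_J`, an independent copy `(φ', X')` of `(φ, X)`,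
bounded measurable kernels `H_k`, bounded measurable mean-zero `f_k`, and weights
`γ_{j,k} = 1` for `j ≠ k`, each summand of the kernel risk depends only on `f_k`:
`E[(φ - Σⱼ γ_{j,k} fⱼ(Xⱼ)) H_k(X_k, X_k') (φ' - Σⱼ γ_{j,k} fⱼ(Xⱼ'))]
  = E[(φ - γ_{k,k} f_k(X_k)) H_k(X_k, X_k') (φ' - γ_{k,k} f_k(X_k'))]`,
and hence the total risk decomposes as a sum of terms each involving a single `f_k`. -/
theorem kernel_risk_separable_for_independent_blocks
    {Ω : Type*} [MeasurableSpace Ω] (μ : Measure Ω) [IsProbabilityMeasure μ]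
    {J : ℕ} (S : Fin J → Type*) [∀ k, MeasurableSpace (S k)]
    (φ : Ω → ℝ) (hφ : MemLp φ 2 μ) (hφmeas : Measurable φ)
    (X : ∀ k, Ω → S k) (hXmeas : ∀ k, Measurable (X k))
    (hpairwise : ∀ j k, j ≠ k → IndepFun (X j) (X k) μ)
    (φ' : Ω → ℝ) (hφ' : MemLp φ' 2 μ) (hφ'meas : Measurable φ')
    (X' : ∀ k, Ω → S k) (hX'meas : ∀ k, Measurable (X' k))
    -- (φ', X₁',…,X_J') is a copy of (φ, X₁,…,X_J): same joint distribution …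
    (hcopy : Measure.map (fun ω => (φ' ω, fun k => X' k ω)) μ =
      Measure.map (fun ω => (φ ω, fun k => X k ω)) μ)
    -- … independent of the original tuple
    (hcopy_indep : IndepFun (fun ω => (φ ω, fun k => X k ω))
      (fun ω => (φ' ω, fun k => X' k ω)) μ)
    (Hker : ∀ k, S k × S k → ℝ)
    (hHmeas : ∀ k, Measurable (Hker k))
    (hHbdd : ∀ k, ∃ C : ℝ, ∀ x, |Hker k x| ≤ C)
    (f : ∀ k, S k → ℝ)
    (hfmeas : ∀ k, Measurable (f k))
    (hfbdd : ∀ k, ∃ C : ℝ, ∀ x, |f k x| ≤ C)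
    (hf0 : ∀ k, ∫ ω, f k (X k ω) ∂μ = 0)
    (γ : Fin J → Fin J → ℝ) (hγ : ∀ j k, j ≠ k → γ j k = 1) :
    (∀ k, ∫ ω, (φ ω - ∑ j, γ j k * f j (X j ω)) * Hker k (X k ω, X' k ω) *
          (φ' ω - ∑ j, γ j k * f j (X' j ω)) ∂μ =
        ∫ ω, (φ ω - γ k k * f k (X k ω)) * Hker k (X k ω, X' k ω) *
          (φ' ω - γ k k * f k (X' k ω)) ∂μ) ∧
    (∑ k, ∫ ω, (φ ω - ∑ j, γ j k * f j (X j ω)) * Hker k (X k ω, X' k ω) *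
          (φ' ω - ∑ j, γ j k * f j (X' j ω)) ∂μ =
      ∑ k, ∫ ω, (φ ω - γ k k * f k (X k ω)) * Hker k (X k ω, X' k ω) *
          (φ' ω - γ k k * f k (X' k ω)) ∂μ) := by
  classical
  set B := ℝ × (∀ i, S i) with hB
  set W : Ω → B := fun ω => (φ ω, fun k => X k ω) with hW
  set W' : Ω → B := fun ω => (φ' ω, fun k => X' k ω) with hW'
  have mW : Measurable W := hφmeas.prodMk (measurable_pi_lambda _ fun i => hXmeas i)
  have mW' : Measurable W' := hφ'meas.prodMk (measurable_pi_lambda _ fun i => hX'meas i)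
  set ν : Measure B := μ.map W with hν
  have hνprob : IsProbabilityMeasure ν := Measure.isProbabilityMeasure_map mW.aemeasurable
  have mπ : ∀ j, Measurable (fun p : B => p.2 j) := fun j =>
    (measurable_pi_apply j).comp measurable_snd
  have hprod : μ.map (fun ω => (W ω, W' ω)) = ν.prod ν := by
    rw [(indepFun_iff_map_prod_eq_prod_map_map mW.aemeasurable mW'.aemeasurable).1 hcopy_indep,
      hcopy]
  have hindν : ∀ j k : Fin J, j ≠ k →
      IndepFun (fun p : B => p.2 j) (fun p : B => p.2 k) ν := by
    intro j k hjk
    refine indepFun_of_identDistrib_pair (hpairwise j k hjk) ?_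
    exact ⟨((hXmeas j).prodMk (hXmeas k)).aemeasurable,
      ((mπ j).prodMk (mπ k)).aemeasurable,
      by rw [hν, Measure.map_map ((mπ j).prodMk (mπ k)) mW]; rfl⟩
  have hf0ν : ∀ j, ∫ p, f j (p.2 j) ∂ν = 0 := by
    intro j
    have hm : Measurable fun p : B => f j (p.2 j) := (hfmeas j).comp (mπ j)
    rw [hν, integral_map mW.aemeasurable hm.aestronglyMeasurable]
    exact hf0 j
  have key : ∀ k, ∫ ω, (φ ω - ∑ j, γ j k * f j (X j ω)) * Hker k (X k ω, X' k ω) *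
          (φ' ω - ∑ j, γ j k * f j (X' j ω)) ∂μ =
        ∫ ω, (φ ω - γ k k * f k (X k ω)) * Hker k (X k ω, X' k ω) *
          (φ' ω - γ k k * f k (X' k ω)) ∂μ := by
    intro k
    obtain ⟨C₀, hC₀⟩ := hHbdd k
    set C := max C₀ 0 with hCdef
    have hCH : ∀ x, |Hker k x| ≤ C := fun x => (hC₀ x).trans (le_max_left _ _)
    set a : B → ℝ := fun p => p.1 - γ k k * f k (p.2 k) with ha
    set s : B → ℝ := fun p => ∑ j ∈ Finset.univ.erase k, f j (p.2 j) with hs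
    have ma : Measurable a := measurable_fst.sub (measurable_const.mul ((hfmeas k).comp (mπ k)))
    have ms : Measurable s := Finset.measurable_sum _ fun j _ => (hfmeas j).comp (mπ j)
    have hsbdd : ∀ p, |s p| ≤ ∑ j ∈ Finset.univ.erase k, (hfbdd j).choose := fun p =>
      (Finset.abs_sum_le_sum_abs _ _).trans (Finset.sum_le_sum fun j _ => (hfbdd j).choose_spec _)
    have hsint : Integrable s ν := integrable_of_abs_le' ms.aestronglyMeasurable hsbdd
    have hfstint : Integrable (fun p : B => p.1) ν := by
      rw [hν, integrable_map_measure measurable_fst.aestronglyMeasurable mW.aemeasurable]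
      exact hφ.integrable one_le_two
    obtain ⟨Cf, hCf⟩ := hfbdd k
    have haint : Integrable a ν := by
      refine hfstint.sub (integrable_of_abs_le'
        (measurable_const.mul ((hfmeas k).comp (mπ k))).aestronglyMeasurable
        (C := |γ k k| * |Cf|) fun p => ?_)
      rw [abs_mul]
      exact mul_le_mul_of_nonneg_left ((hCf _).trans (le_abs_self _)) (abs_nonneg _)
    -- integrability of the product-type integrands on `ν.prod ν`
    have master : ∀ u v : B → ℝ, Measurable u → Measurable v →
        Integrable u ν → Integrable v ν →
        Integrable (fun z : B × B =>
          u z.1 * Hker k (z.1.2 k, z.2.2 k) * v z.2) (ν.prod ν) := by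
      intro u v hu hv hui hvi
      have hb : Integrable (fun z : B × B => (C * |u z.1|) * |v z.2|) (ν.prod ν) :=
        (hui.abs.const_mul C).mul_prod hvi.abs
      refine hb.mono' (((hu.comp measurable_fst).mul ((hHmeas k).comp
        (((mπ k).comp measurable_fst).prodMk ((mπ k).comp measurable_snd)))).mul
        (hv.comp measurable_snd)).aestronglyMeasurable
        (Filter.Eventually.of_forall fun z => ?_)
      rw [Real.norm_eq_abs, abs_mul, abs_mul]
      have h1 : |u z.1| * |Hker k (z.1.2 k, z.2.2 k)| * |v z.2| ≤ |u z.1| * C * |v z.2| :=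
        mul_le_mul_of_nonneg_right (mul_le_mul_of_nonneg_left (hCH _) (abs_nonneg _))
          (abs_nonneg _)
      exact h1.trans_eq (by ring)
    -- the two inner "mean zero" computations
    have hfprodint : ∀ (j : Fin J) (g : B → ℝ) (Cg : ℝ), Measurable g → (∀ x, |g x| ≤ Cg) →
        Integrable (fun p : B => f j (p.2 j) * g p) ν := by
      intro j g Cg hg hgb
      refine integrable_of_abs_le' (((hfmeas j).comp (mπ j)).mul hg).aestronglyMeasurable
        (C := |(hfbdd j).choose| * |Cg|) fun p => ?_
      rw [abs_mul]
      exact mul_le_mul (((hfbdd j).choose_spec _).trans (le_abs_self _))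
        ((hgb p).trans (le_abs_self _)) (abs_nonneg _) (abs_nonneg _)
    have inner1 : ∀ c : S k, ∫ x, s x * Hker k (x.2 k, c) ∂ν = 0 := by
      intro c
      have hrw : (fun x : B => s x * Hker k (x.2 k, c)) =
          fun x => ∑ j ∈ Finset.univ.erase k, f j (x.2 j) * Hker k (x.2 k, c) := by
        funext x; rw [hs]; exact Finset.sum_mul ..
      have hm2 : Measurable fun x : B => Hker k (x.2 k, c) :=
        (hHmeas k).comp ((mπ k).prodMk measurable_const)
      rw [hrw, integral_finset_sum _ (fun j _ =>
        hfprodint j (fun x => Hker k (x.2 k, c)) C hm2 (fun x => hCH _))]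
      refine Finset.sum_eq_zero fun j hj => ?_
      have hm1 : Measurable fun x : B => f j (x.2 j) := (hfmeas j).comp (mπ j)
      have hI : IndepFun (fun x : B => f j (x.2 j)) (fun x : B => Hker k (x.2 k, c)) ν :=
        (hindν j k (Finset.ne_of_mem_erase hj)).comp (hfmeas j)
          ((hHmeas k).comp (measurable_id.prodMk measurable_const))
      have h := hI.integral_mul_eq_mul_integral hm1.aestronglyMeasurable hm2.aestronglyMeasurable
      calc ∫ x, f j (x.2 j) * Hker k (x.2 k, c) ∂ν
          = (∫ x, f j (x.2 j) ∂ν) * ∫ x, Hker k (x.2 k, c) ∂ν := h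
        _ = 0 := by rw [hf0ν j, zero_mul]
    have inner2 : ∀ c : S k, ∫ y, Hker k (c, y.2 k) * s y ∂ν = 0 := by
      intro c
      have hrw : (fun y : B => Hker k (c, y.2 k) * s y) =
          fun y => ∑ j ∈ Finset.univ.erase k, f j (y.2 j) * Hker k (c, y.2 k) := by
        funext y; rw [hs, Finset.mul_sum]
        exact Finset.sum_congr rfl fun j _ => mul_comm _ _
      have hm2 : Measurable fun y : B => Hker k (c, y.2 k) :=
        (hHmeas k).comp (measurable_const.prodMk (mπ k))
      rw [hrw, integral_finset_sum _ (fun j _ =>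
        hfprodint j (fun y => Hker k (c, y.2 k)) C hm2 (fun x => hCH _))]
      refine Finset.sum_eq_zero fun j hj => ?_
      have hm1 : Measurable fun y : B => f j (y.2 j) := (hfmeas j).comp (mπ j)
      have hI : IndepFun (fun y : B => f j (y.2 j)) (fun y : B => Hker k (c, y.2 k)) ν :=
        (hindν j k (Finset.ne_of_mem_erase hj)).comp (hfmeas j)
          ((hHmeas k).comp (measurable_const.prodMk measurable_id))
      have h := hI.integral_mul_eq_mul_integral hm1.aestronglyMeasurable hm2.aestronglyMeasurable
      calc ∫ y, f j (y.2 j) * Hker k (c, y.2 k) ∂ν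
          = (∫ y, f j (y.2 j) ∂ν) * ∫ y, Hker k (c, y.2 k) ∂ν := h
        _ = 0 := by rw [hf0ν j, zero_mul]
    -- the three cross terms vanish
    have zero1 : ∀ v : B → ℝ, Measurable v → Integrable v ν →
        ∫ z, s z.1 * Hker k (z.1.2 k, z.2.2 k) * v z.2 ∂(ν.prod ν) = 0 := by
      intro v hv hvi
      rw [integral_prod_symm _ (master s v ms hv hsint hvi)]
      simp_rw [integral_mul_const, inner1, zero_mul, integral_zero]
    have zero2 : ∀ u : B → ℝ, Measurable u → Integrable u ν →
        ∫ z, u z.1 * Hker k (z.1.2 k, z.2.2 k) * s z.2 ∂(ν.prod ν) = 0 := by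
      intro u hu hui
      rw [integral_prod _ (master u s hu ms hui hsint)]
      simp_rw [mul_assoc, integral_const_mul, inner2, mul_zero, integral_zero]
    -- transfer both sides to `ν.prod ν`
    have hsplit : ∀ (y : ∀ i, S i), ∑ j, γ j k * f j (y j) =
        γ k k * f k (y k) + ∑ j ∈ Finset.univ.erase k, f j (y j) := by
      intro y
      rw [← Finset.add_sum_erase _ (fun j => γ j k * f j (y j)) (Finset.mem_univ k)]
      exact congrArg _ (Finset.sum_congr rfl fun j hj => by
        rw [hγ j k (Finset.ne_of_mem_erase hj), one_mul])
    have mF : Measurable (fun z : B × B =>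
        (a z.1 - s z.1) * Hker k (z.1.2 k, z.2.2 k) * (a z.2 - s z.2)) :=
      (((ma.sub ms).comp measurable_fst).mul ((hHmeas k).comp
        (((mπ k).comp measurable_fst).prodMk ((mπ k).comp measurable_snd)))).mul
        ((ma.sub ms).comp measurable_snd)
    have mG : Measurable (fun z : B × B =>
        a z.1 * Hker k (z.1.2 k, z.2.2 k) * a z.2) :=
      ((ma.comp measurable_fst).mul ((hHmeas k).comp
        (((mπ k).comp measurable_fst).prodMk ((mπ k).comp measurable_snd)))).mul
        (ma.comp measurable_snd)
    have hL : ∫ ω, (φ ω - ∑ j, γ j k * f j (X j ω)) * Hker k (X k ω, X' k ω) *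
          (φ' ω - ∑ j, γ j k * f j (X' j ω)) ∂μ
        = ∫ z, (a z.1 - s z.1) * Hker k (z.1.2 k, z.2.2 k) * (a z.2 - s z.2) ∂(ν.prod ν) := by
      rw [← hprod, integral_map (mW.prodMk mW').aemeasurable mF.aestronglyMeasurable]
      refine integral_congr_ae (Filter.Eventually.of_forall fun ω => ?_)
      simp only [ha, hs, hW, hW', hsplit]
      ring
    have hR : ∫ ω, (φ ω - γ k k * f k (X k ω)) * Hker k (X k ω, X' k ω) *
          (φ' ω - γ k k * f k (X' k ω)) ∂μ
        = ∫ z, a z.1 * Hker k (z.1.2 k, z.2.2 k) * a z.2 ∂(ν.prod ν) := by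
      rw [← hprod, integral_map (mW.prodMk mW').aemeasurable mG.aestronglyMeasurable]
    rw [hL, hR]
    calc ∫ z, (a z.1 - s z.1) * Hker k (z.1.2 k, z.2.2 k) * (a z.2 - s z.2) ∂(ν.prod ν)
        = ∫ z, (a z.1 * Hker k (z.1.2 k, z.2.2 k) * a z.2
            - a z.1 * Hker k (z.1.2 k, z.2.2 k) * s z.2)
            - (s z.1 * Hker k (z.1.2 k, z.2.2 k) * a z.2
            - s z.1 * Hker k (z.1.2 k, z.2.2 k) * s z.2) ∂(ν.prod ν) :=
          integral_congr_ae (Filter.Eventually.of_forall fun z => by ring)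
      _ = (∫ z, a z.1 * Hker k (z.1.2 k, z.2.2 k) * a z.2
            - a z.1 * Hker k (z.1.2 k, z.2.2 k) * s z.2 ∂(ν.prod ν))
          - ∫ z, s z.1 * Hker k (z.1.2 k, z.2.2 k) * a z.2
            - s z.1 * Hker k (z.1.2 k, z.2.2 k) * s z.2 ∂(ν.prod ν) :=
          integral_sub ((master a a ma ma haint haint).sub (master a s ma ms haint hsint))
            ((master s a ms ma hsint haint).sub (master s s ms ms hsint hsint))
      _ = ((∫ z, a z.1 * Hker k (z.1.2 k, z.2.2 k) * a z.2 ∂(ν.prod ν))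
            - ∫ z, a z.1 * Hker k (z.1.2 k, z.2.2 k) * s z.2 ∂(ν.prod ν))
          - ((∫ z, s z.1 * Hker k (z.1.2 k, z.2.2 k) * a z.2 ∂(ν.prod ν))
            - ∫ z, s z.1 * Hker k (z.1.2 k, z.2.2 k) * s z.2 ∂(ν.prod ν)) := by
          rw [integral_sub (master a a ma ma haint haint) (master a s ma ms haint hsint),
            integral_sub (master s a ms ma hsint haint) (master s s ms ms hsint hsint)]
      _ = ∫ z, a z.1 * Hker k (z.1.2 k, z.2.2 k) * a z.2 ∂(ν.prod ν) := by
          rw [zero2 a ma haint, zero1 a ma haint, zero1 s ms hsint]; ring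
  exact ⟨key, Finset.sum_congr rfl fun k _ => key k⟩
end
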